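/- (Hohenberg–Kohn/Mermin-type theorem for the canonical ensemble) Suppose v ↦ ρ_v := e^{-β(H₀+V(v))}/Z[v] is injective on traceless Hermitian potentials v. Then the map v ↦ γ[ρ_v] from traceless Hermitian potentials to 1RDMs is also injective: two distinct traceless potentials cannot yield the same equilibrium 1RDM. -/

import Mathlib

open Matrix BigOperators
open scoped ComplexOrder


/-- Von Neumann entropy `S(ρ) = -Tr(ρ log ρ)`, defined spectrally with `0 log 0 = 0`. -/
noncomputable def vnEntropy {n : Type*} [Fintype n] [DecidableEq n]
    (ρ : Matrix n n ℂ) : ℝ :=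
  if h : ρ.IsHermitian then -∑ i, h.eigenvalues i * Real.log (h.eigenvalues i) else 0

/-- A density matrix: Hermitian positive semidefinite with unit trace. -/
def IsDensityMatrix {n : Type*} [Fintype n] [DecidableEq n] (ρ : Matrix n n ℂ) : Prop :=
  ρ.PosSemidef ∧ ρ.trace = 1

/-- The Helmholtz functional `Ω(ρ) = Tr(ρH) + β⁻¹ Tr(ρ log ρ) = Tr(ρH) - β⁻¹ S(ρ)`. -/
noncomputable def helmholtz {n : Type*} [Fintype n] [DecidableEq n]
    (H : Matrix n n ℂ) (β : ℝ) (ρ : Matrix n n ℂ) : ℝ :=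
  ((ρ * H).trace).re - β⁻¹ * vnEntropy ρ

/-- The Gibbs state `e^{-βH} / Tr(e^{-βH})`. -/
noncomputable def gibbs {n : Type*} [Fintype n] [DecidableEq n]
    (β : ℝ) (H : Matrix n n ℂ) : Matrix n n ℂ :=
  ((NormedSpace.exp ((-β : ℂ) • H)).trace)⁻¹ • NormedSpace.exp ((-β : ℂ) • H)

namespace MerminAux


lemma scalar_klein_le {x y : ℝ} (hx : 0 ≤ x) (hy : 0 < y) :
    x - y ≤ x * Real.log x - x * Real.log y := by
  rcases eq_or_lt_of_le hx with h | h
  · simp [← h]; linarith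
  · have h1 : Real.log (y / x) ≤ y / x - 1 := Real.log_le_sub_one_of_pos (by positivity)
    have h2 : Real.log (y / x) = Real.log y - Real.log x := Real.log_div (ne_of_gt hy) (ne_of_gt h)
    have h3 : x * Real.log (y / x) ≤ x * (y / x - 1) := by
      exact mul_le_mul_of_nonneg_left h1 h.le
    have h4 : x * (y / x) = y := by field_simp
    rw [h2] at h3
    nlinarith
  
lemma scalar_klein_lt {x y : ℝ} (hx : 0 ≤ x) (hy : 0 < y) (hxy : x ≠ y) :
    x - y < x * Real.log x - x * Real.log y := by
  rcases eq_or_lt_of_le hx with h | h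
  · simp [← h]; linarith
  · have hne : y / x ≠ 1 := by
      intro hc
      exact hxy (by field_simp at hc; linarith)
    have h1 : Real.log (y / x) < y / x - 1 := Real.log_lt_sub_one_of_pos (by positivity) hne
    have h2 : Real.log (y / x) = Real.log y - Real.log x := Real.log_div (ne_of_gt hy) (ne_of_gt h)
    have h3 : x * Real.log (y / x) < x * (y / x - 1) := by
      exact mul_lt_mul_of_pos_left h1 h
    have h4 : x * (y / x) = y := by field_simp
    rw [h2] at h3
    nlinarith

/-- consequence: if the inequality is an equality then `x = y`. -/
lemma scalar_klein_eq {x y : ℝ} (hx : 0 ≤ x) (hy : 0 < y)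
    (h : x * Real.log x - x * Real.log y = x - y) : x = y := by
  by_contra hne
  exact absurd h (ne_of_gt (scalar_klein_lt hx hy hne))

lemma row_sum_normSq {n : Type*} [Fintype n] [DecidableEq n] {V : Matrix n n ℂ}
    (h : V * star V = 1) (i : n) : ∑ j, Complex.normSq (V i j) = 1 := by
  have h2 := congrFun (congrFun h i) i
  simp only [Matrix.mul_apply, Matrix.star_apply, Matrix.one_apply_eq, Complex.star_def,
    Complex.mul_conj] at h2
  exact_mod_cast h2

lemma col_sum_normSq {n : Type*} [Fintype n] [DecidableEq n] {V : Matrix n n ℂ}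
    (h : star V * V = 1) (j : n) : ∑ i, Complex.normSq (V i j) = 1 := by
  have h2 := congrFun (congrFun h j) j
  simp only [Matrix.mul_apply, Matrix.star_apply, Matrix.one_apply_eq, Complex.star_def] at h2
  have : ∀ i, (starRingEnd ℂ) (V i j) * V i j = (Complex.normSq (V i j) : ℂ) := by
    intro i; rw [mul_comm, Complex.mul_conj]
  rw [Finset.sum_congr rfl fun i _ => this i] at h2
  exact_mod_cast h2


section Spectral

variable {n : Type*} [Fintype n] [DecidableEq n]

/-- Partition function of a Hermitian matrix. -/
noncomputable def Z (β : ℝ) {A : Matrix n n ℂ} (hA : A.IsHermitian) : ℝ :=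
  ∑ j, Real.exp (-β * hA.eigenvalues j)

lemma Z_pos [Nonempty n] (β : ℝ) {A : Matrix n n ℂ} (hA : A.IsHermitian) : 0 < Z β hA :=
  Finset.sum_pos (fun j _ => Real.exp_pos _) Finset.univ_nonempty

/-- Gibbs weights. -/
noncomputable def gw (β : ℝ) {A : Matrix n n ℂ} (hA : A.IsHermitian) (j : n) : ℝ :=
  Real.exp (-β * hA.eigenvalues j) / Z β hA

lemma gw_pos [Nonempty n] (β : ℝ) {A : Matrix n n ℂ} (hA : A.IsHermitian) (j : n) :
    0 < gw β hA j := div_pos (Real.exp_pos _) (Z_pos β hA)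

lemma gw_sum [Nonempty n] (β : ℝ) {A : Matrix n n ℂ} (hA : A.IsHermitian) :
    ∑ j, gw β hA j = 1 := by
  simp only [gw]
  rw [← Finset.sum_div]
  exact div_self (ne_of_gt (Z_pos β hA))

lemma log_gw [Nonempty n] (β : ℝ) {A : Matrix n n ℂ} (hA : A.IsHermitian) (j : n) :
    Real.log (gw β hA j) = -β * hA.eigenvalues j - Real.log (Z β hA) := by
  rw [gw, Real.log_div (Real.exp_ne_zero _) (ne_of_gt (Z_pos β hA)), Real.log_exp]

lemma exp_spectral (β : ℝ) {A : Matrix n n ℂ} (hA : A.IsHermitian) :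
    NormedSpace.exp ((-β : ℂ) • A)
      = (hA.eigenvectorUnitary : Matrix n n ℂ)
        * diagonal (fun j => (Real.exp (-β * hA.eigenvalues j) : ℂ))
        * star (hA.eigenvectorUnitary : Matrix n n ℂ) := by
  set U : Matrix n n ℂ := (hA.eigenvectorUnitary : Matrix n n ℂ) with hUdef
  have hsU : star U * U = 1 := Matrix.mem_unitaryGroup_iff'.mp hA.eigenvectorUnitary.2
  have hUs : U * star U = 1 := Matrix.mem_unitaryGroup_iff.mp hA.eigenvectorUnitary.2
  have hUinv : U⁻¹ = star U := Matrix.inv_eq_left_inv hsU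
  have hUnit : IsUnit U := ⟨⟨U, star U, hUs, hsU⟩, rfl⟩
  have hdiag : (-β : ℂ) • diagonal (RCLike.ofReal ∘ hA.eigenvalues)
      = diagonal (fun j => ((-β * hA.eigenvalues j : ℝ) : ℂ)) := by
    rw [← Matrix.diagonal_smul]
    refine congrArg Matrix.diagonal (funext fun j => ?_)
    simp [Function.comp]
  have key : (-β : ℂ) • A = U * diagonal (fun j => ((-β * hA.eigenvalues j : ℝ) : ℂ)) * U⁻¹ := by
    rw [hUinv]
    conv_lhs => rw [hA.spectral_theorem, Unitary.conjStarAlgAut_apply]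
    rw [← Matrix.smul_mul, ← Matrix.mul_smul, hdiag]
  rw [key, Matrix.exp_conj U _ hUnit, Matrix.exp_diagonal, hUinv]
  congr 2
  rw [Pi.exp_def, ← Complex.exp_eq_exp_ℂ]
  refine congrArg Matrix.diagonal (funext fun j => ?_)
  rw [← Complex.ofReal_exp]

lemma trace_exp (β : ℝ) {A : Matrix n n ℂ} (hA : A.IsHermitian) :
    (NormedSpace.exp ((-β : ℂ) • A)).trace = ((Z β hA : ℝ) : ℂ) := by
  rw [exp_spectral β hA, Matrix.trace_mul_cycle,
    Matrix.mem_unitaryGroup_iff'.mp hA.eigenvectorUnitary.2, one_mul, Matrix.trace_diagonal]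
  push_cast [Z]
  rfl

lemma gibbs_spectral [Nonempty n] (β : ℝ) {A : Matrix n n ℂ} (hA : A.IsHermitian) :
    gibbs β A = (hA.eigenvectorUnitary : Matrix n n ℂ)
        * diagonal (fun j => (gw β hA j : ℂ))
        * star (hA.eigenvectorUnitary : Matrix n n ℂ) := by
  have hdiag : ((Z β hA : ℝ) : ℂ)⁻¹ • diagonal (fun j => (Real.exp (-β * hA.eigenvalues j) : ℂ))
      = diagonal (fun j => (gw β hA j : ℂ)) := by
    rw [← Matrix.diagonal_smul]
    refine congrArg Matrix.diagonal (funext fun j => ?_)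
    rw [Pi.smul_apply, smul_eq_mul, gw, div_eq_inv_mul]
    push_cast
    ring
  rw [gibbs, trace_exp β hA, exp_spectral β hA, ← Matrix.smul_mul, ← Matrix.mul_smul, hdiag]

end Spectral


section Klein

variable {n : Type*} [Fintype n] [DecidableEq n]

lemma trace_diag_conj (V : Matrix n n ℂ) (a b : n → ℝ) :
    (diagonal (fun i => (a i : ℂ)) * (V * (diagonal (fun j => (b j : ℂ)) * star V))).trace
      = ((∑ i, ∑ j, a i * b j * Complex.normSq (V i j) : ℝ) : ℂ) := by
  have entry : ∀ i, (diagonal (fun i => (a i : ℂ))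
        * (V * (diagonal (fun j => (b j : ℂ)) * star V))) i i
      = ((∑ j, a i * b j * Complex.normSq (V i j) : ℝ) : ℂ) := by
    intro i
    rw [Matrix.diagonal_mul, Matrix.mul_apply]
    simp only [Matrix.diagonal_mul, Matrix.star_apply, Complex.star_def]
    rw [Finset.mul_sum, Complex.ofReal_sum]
    refine Finset.sum_congr rfl fun j _ => ?_
    have h1 : (a i : ℂ) * (V i j * ((b j : ℂ) * (starRingEnd ℂ) (V i j)))
        = (a i : ℂ) * (b j : ℂ) * (V i j * (starRingEnd ℂ) (V i j)) := by ring
    rw [h1, Complex.mul_conj]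
    push_cast
    ring
  simp only [Matrix.trace, Matrix.diag_apply]
  rw [Complex.ofReal_sum]
  exact Finset.sum_congr rfl fun i _ => entry i

lemma sum_f_eigenvalues {σ : Matrix n n ℂ} (hσ : σ.IsHermitian)
    {U : Matrix n n ℂ} (hU1 : U * star U = 1) (hU2 : star U * U = 1) (q : n → ℝ)
    (hspec : σ = U * diagonal (fun j => (q j : ℂ)) * star U) (f : ℝ → ℝ) :
    ∑ i, f (hσ.eigenvalues i) = ∑ j, f (q j) := by
  set W : Matrix n n ℂ := (hσ.eigenvectorUnitary : Matrix n n ℂ) with hWdef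
  have hW1 : W * star W = 1 := Matrix.mem_unitaryGroup_iff.mp hσ.eigenvectorUnitary.2
  have hW2 : star W * W = 1 := Matrix.mem_unitaryGroup_iff'.mp hσ.eigenvectorUnitary.2
  set p := hσ.eigenvalues with hpdef
  set V : Matrix n n ℂ := star W * U with hVdef
  have hVV : V * star V = 1 := by
    rw [hVdef, StarMul.star_mul, star_star, mul_assoc, ← mul_assoc U, hU1, one_mul, hW2]
  have hsVV : star V * V = 1 := by
    rw [hVdef, StarMul.star_mul, star_star, mul_assoc, ← mul_assoc W, hW1, one_mul, hU2]
  have hσW : σ = W * diagonal (fun i => (p i : ℂ)) * star W := hσ.spectral_theorem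
  have e1 : star W * σ * U = diagonal (fun i => (p i : ℂ)) * V := by
    rw [hσW, hVdef]
    simp only [← mul_assoc]
    rw [hW2, one_mul]
  have e2 : star W * σ * U = V * diagonal (fun j => (q j : ℂ)) := by
    rw [hspec, hVdef]
    simp only [mul_assoc]
    rw [hU2, mul_one]
  have hDV : diagonal (fun i => (p i : ℂ)) * V = V * diagonal (fun j => (q j : ℂ)) :=
    e1.symm.trans e2
  have hpq : ∀ i j, V i j ≠ 0 → p i = q j := by
    intro i j hV0
    have h := congrFun (congrFun hDV i) j
    rw [Matrix.diagonal_mul, Matrix.mul_diagonal, mul_comm (V i j)] at h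
    have h2 : (p i : ℂ) = (q j : ℂ) := mul_right_cancel₀ hV0 h
    exact_mod_cast h2
  calc ∑ i, f (p i) = ∑ i, ∑ j, Complex.normSq (V i j) * f (p i) := by
        refine Finset.sum_congr rfl fun i _ => ?_
        rw [← Finset.sum_mul, row_sum_normSq hVV i, one_mul]
    _ = ∑ i, ∑ j, Complex.normSq (V i j) * f (q j) := by
        refine Finset.sum_congr rfl fun i _ => Finset.sum_congr rfl fun j _ => ?_
        by_cases h : V i j = 0
        · simp [h]
        · rw [hpq i j h]
    _ = ∑ j, ∑ i, Complex.normSq (V i j) * f (q j) := Finset.sum_comm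
    _ = ∑ j, f (q j) := by
        refine Finset.sum_congr rfl fun j _ => ?_
        rw [← Finset.sum_mul, col_sum_normSq hsVV j, one_mul]

lemma gibbs_isDensity [Nonempty n] (β : ℝ) {A : Matrix n n ℂ} (hA : A.IsHermitian) :
    IsDensityMatrix (gibbs β A) := by
  have hU2 : star (hA.eigenvectorUnitary : Matrix n n ℂ) * (hA.eigenvectorUnitary : Matrix n n ℂ)
      = 1 := Matrix.mem_unitaryGroup_iff'.mp hA.eigenvectorUnitary.2
  constructor
  · rw [gibbs_spectral β hA]
    have hdiag : (diagonal (fun j => ((gw β hA j : ℝ) : ℂ))).PosSemidef := by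
      rw [Matrix.posSemidef_diagonal_iff]
      intro j
      exact_mod_cast (gw_pos β hA j).le
    have h2 := hdiag.mul_mul_conjTranspose_same (hA.eigenvectorUnitary : Matrix n n ℂ)
    simpa [Matrix.star_eq_conjTranspose] using h2
  · rw [gibbs_spectral β hA, Matrix.trace_mul_cycle, hU2, one_mul, Matrix.trace_diagonal,
      ← Complex.ofReal_sum, gw_sum, Complex.ofReal_one]

end Klein


section KeyLemmas

variable {n : Type*} [Fintype n] [DecidableEq n]

lemma key_gibbs [Nonempty n] (β : ℝ) {A : Matrix n n ℂ} (hA : A.IsHermitian) :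
    β * ((gibbs β A * A).trace).re - vnEntropy (gibbs β A) + Real.log (Z β hA) = 0 := by
  set U : Matrix n n ℂ := (hA.eigenvectorUnitary : Matrix n n ℂ) with hUdef
  have hU1 : U * star U = 1 := Matrix.mem_unitaryGroup_iff.mp hA.eigenvectorUnitary.2
  have hU2 : star U * U = 1 := Matrix.mem_unitaryGroup_iff'.mp hA.eigenvectorUnitary.2
  set lam := hA.eigenvalues with hldef
  set q := gw β hA with hqdef
  have hspec : gibbs β A = U * diagonal (fun j => (q j : ℂ)) * star U := gibbs_spectral β hA
  have hσ : (gibbs β A).IsHermitian := ((gibbs_isDensity β hA).1).1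
  have hAU : A = U * diagonal (fun j => (lam j : ℂ)) * star U := hA.spectral_theorem
  have h1 : gibbs β A * A
      = U * (diagonal (fun j => (q j : ℂ)) * diagonal (fun j => (lam j : ℂ))) * star U := by
    conv_lhs => rw [hspec, hAU]
    simp only [mul_assoc]
    rw [← mul_assoc (star U) U, hU2, one_mul]
  have h2 : (gibbs β A * A).trace = ((∑ j, q j * lam j : ℝ) : ℂ) := by
    rw [h1, Matrix.trace_mul_cycle, ← mul_assoc, hU2, one_mul, Matrix.diagonal_mul_diagonal,
      Matrix.trace_diagonal, Complex.ofReal_sum]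
    push_cast
    rfl
  have htr : ((gibbs β A * A).trace).re = ∑ j, q j * lam j := by
    rw [h2, Complex.ofReal_re]
  have hS : vnEntropy (gibbs β A) = -∑ j, q j * Real.log (q j) := by
    rw [vnEntropy, dif_pos hσ]
    congr 1
    exact sum_f_eigenvalues hσ hU1 hU2 q hspec (fun t => t * Real.log t)
  have hsum : ∑ j, q j * Real.log (q j)
      = -β * (∑ j, q j * lam j) - Real.log (Z β hA) := by
    have h3 : ∀ j ∈ Finset.univ, q j * Real.log (q j)
        = -β * (q j * lam j) - Real.log (Z β hA) * q j := by
      intro j _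
      rw [hqdef, hldef, log_gw β hA j]
      ring
    rw [Finset.sum_congr rfl h3, Finset.sum_sub_distrib, ← Finset.mul_sum, ← Finset.mul_sum,
      hqdef, gw_sum β hA, mul_one]
  rw [htr, hS, hsum]
  ring

lemma key [Nonempty n] (β : ℝ) {A : Matrix n n ℂ} (hA : A.IsHermitian)
    {ρ : Matrix n n ℂ} (hρ : IsDensityMatrix ρ) :
    0 ≤ β * ((ρ * A).trace).re - vnEntropy ρ + Real.log (Z β hA) ∧
      (β * ((ρ * A).trace).re - vnEntropy ρ + Real.log (Z β hA) = 0 → ρ = gibbs β A) := by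
  obtain ⟨hpsd, htr1⟩ := hρ
  have hρh : ρ.IsHermitian := hpsd.1
  set U : Matrix n n ℂ := (hA.eigenvectorUnitary : Matrix n n ℂ) with hUdef
  have hU1 : U * star U = 1 := Matrix.mem_unitaryGroup_iff.mp hA.eigenvectorUnitary.2
  have hU2 : star U * U = 1 := Matrix.mem_unitaryGroup_iff'.mp hA.eigenvectorUnitary.2
  set W : Matrix n n ℂ := (hρh.eigenvectorUnitary : Matrix n n ℂ) with hWdef
  have hW1 : W * star W = 1 := Matrix.mem_unitaryGroup_iff.mp hρh.eigenvectorUnitary.2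
  have hW2 : star W * W = 1 := Matrix.mem_unitaryGroup_iff'.mp hρh.eigenvectorUnitary.2
  set p := hρh.eigenvalues with hpdef
  set lam := hA.eigenvalues with hldef
  set q := gw β hA with hqdef
  set V : Matrix n n ℂ := star W * U with hVdef
  have hVV : V * star V = 1 := by
    rw [hVdef, StarMul.star_mul, star_star, mul_assoc, ← mul_assoc U, hU1, one_mul, hW2]
  have hsVV : star V * V = 1 := by
    rw [hVdef, StarMul.star_mul, star_star, mul_assoc, ← mul_assoc W, hW1, one_mul, hU2]
  set P : n → n → ℝ := fun i j => Complex.normSq (V i j) with hPdef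
  have hProw : ∀ i, ∑ j, P i j = 1 := row_sum_normSq hVV
  have hPcol : ∀ j, ∑ i, P i j = 1 := col_sum_normSq hsVV
  have hP0 : ∀ i j, 0 ≤ P i j := fun i j => Complex.normSq_nonneg _
  have hp0 : ∀ i, 0 ≤ p i := hpsd.eigenvalues_nonneg
  have hρW : ρ = W * diagonal (fun i => (p i : ℂ)) * star W := hρh.spectral_theorem
  have hAU : A = U * diagonal (fun j => (lam j : ℂ)) * star U := hA.spectral_theorem
  have hp1 : ∑ i, p i = 1 := by
    have h1 : ρ.trace = ∑ i, ((p i : ℝ) : ℂ) := by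
      rw [hρW, Matrix.trace_mul_cycle, hW2, one_mul, Matrix.trace_diagonal]
    rw [htr1] at h1
    exact_mod_cast h1.symm
  have hT : (ρ * A).trace = ((∑ i, ∑ j, p i * lam j * P i j : ℝ) : ℂ) := by
    have h1 : ρ * A = W * (diagonal (fun i => (p i : ℂ))
        * (V * (diagonal (fun j => (lam j : ℂ)) * star V))) * star W := by
      rw [hρW, hAU, hVdef]
      simp only [StarMul.star_mul, star_star, ← mul_assoc]
      rw [mul_assoc _ W (star W), hW1, mul_one]
    rw [h1, Matrix.trace_mul_cycle, ← mul_assoc, hW2, one_mul, trace_diag_conj]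
  have hTre : ((ρ * A).trace).re = ∑ i, ∑ j, p i * lam j * P i j := by
    rw [hT, Complex.ofReal_re]
  have hS : vnEntropy ρ = -∑ i, p i * Real.log (p i) := by rw [vnEntropy, dif_pos hρh]
  have hq0 : ∀ j, 0 < q j := gw_pos β hA
  have hq1 : ∑ j, q j = 1 := gw_sum β hA
  have hlogq : ∀ j, Real.log (q j) = -β * lam j - Real.log (Z β hA) := log_gw β hA
  have hFsum : β * ((ρ * A).trace).re - vnEntropy ρ + Real.log (Z β hA)
      = ∑ i, ∑ j, P i j * (p i * Real.log (p i) - p i * Real.log (q j)) := by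
    have hterm : ∀ i j, P i j * (p i * Real.log (p i) - p i * Real.log (q j))
        = p i * Real.log (p i) * P i j + β * (p i * lam j * P i j)
          + Real.log (Z β hA) * (p i * P i j) := by
      intro i j
      rw [hlogq j]
      ring
    have h5 : ∀ i, ∑ j, P i j * (p i * Real.log (p i) - p i * Real.log (q j))
        = p i * Real.log (p i) + β * (∑ j, p i * lam j * P i j)
          + Real.log (Z β hA) * p i := by
      intro i
      rw [Finset.sum_congr rfl fun j _ => hterm i j, Finset.sum_add_distrib,
        Finset.sum_add_distrib, ← Finset.mul_sum, hProw i, mul_one, ← Finset.mul_sum,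
        ← Finset.mul_sum, ← Finset.mul_sum, hProw i, mul_one]
    rw [Finset.sum_congr rfl fun i _ => h5 i, Finset.sum_add_distrib, Finset.sum_add_distrib,
      ← Finset.mul_sum, ← Finset.mul_sum, hp1, mul_one, hTre, hS]
    ring
  have hA1 : ∑ i, ∑ j, P i j * p i = 1 := by
    calc ∑ i, ∑ j, P i j * p i = ∑ i, (∑ j, P i j) * p i := by
          refine Finset.sum_congr rfl fun i _ => ?_
          rw [Finset.sum_mul]
      _ = ∑ i, p i := by
          refine Finset.sum_congr rfl fun i _ => ?_
          rw [hProw i, one_mul]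
      _ = 1 := hp1
  have hA2 : ∑ i, ∑ j, P i j * q j = 1 := by
    rw [Finset.sum_comm]
    calc ∑ j, ∑ i, P i j * q j = ∑ j, (∑ i, P i j) * q j := by
          refine Finset.sum_congr rfl fun j _ => ?_
          rw [Finset.sum_mul]
      _ = ∑ j, q j := by
          refine Finset.sum_congr rfl fun j _ => ?_
          rw [hPcol j, one_mul]
      _ = 1 := hq1
  have hzero : ∑ i, ∑ j, P i j * (p i - q j) = 0 := by
    calc ∑ i, ∑ j, P i j * (p i - q j)
        = ∑ i, ∑ j, (P i j * p i - P i j * q j) := by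
          refine Finset.sum_congr rfl fun i _ => Finset.sum_congr rfl fun j _ => by ring
      _ = (∑ i, ∑ j, P i j * p i) - ∑ i, ∑ j, P i j * q j := by
          rw [← Finset.sum_sub_distrib]
          exact Finset.sum_congr rfl fun i _ => by rw [Finset.sum_sub_distrib]
      _ = 0 := by rw [hA1, hA2, sub_self]
  have hlow : ∀ i j, P i j * (p i - q j)
      ≤ P i j * (p i * Real.log (p i) - p i * Real.log (q j)) :=
    fun i j => mul_le_mul_of_nonneg_left (scalar_klein_le (hp0 i) (hq0 j)) (hP0 i j)
  have hge : 0 ≤ β * ((ρ * A).trace).re - vnEntropy ρ + Real.log (Z β hA) := by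
    rw [hFsum, ← hzero]
    exact Finset.sum_le_sum fun i _ => Finset.sum_le_sum fun j _ => hlow i j
  refine ⟨hge, fun hF0 => ?_⟩
  -- equality case: every term is tight
  have hflat_le : ∀ ij ∈ (Finset.univ : Finset (n × n)),
      P ij.1 ij.2 * (p ij.1 - q ij.2)
        ≤ P ij.1 ij.2 * (p ij.1 * Real.log (p ij.1) - p ij.1 * Real.log (q ij.2)) :=
    fun ij _ => hlow ij.1 ij.2
  have hsum_eq : ∑ ij : n × n, P ij.1 ij.2 * (p ij.1 - q ij.2)
      = ∑ ij : n × n, P ij.1 ij.2 * (p ij.1 * Real.log (p ij.1) - p ij.1 * Real.log (q ij.2)) := by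
    simp only [Fintype.sum_prod_type]
    rw [hzero, ← hFsum, hF0]
  have heach := (Finset.sum_eq_sum_iff_of_le hflat_le).mp hsum_eq
  have hpq : ∀ i j, V i j ≠ 0 → p i = q j := by
    intro i j hV0
    have hPne : P i j ≠ 0 := fun hc => hV0 (Complex.normSq_eq_zero.mp hc)
    have h6 := heach (i, j) (Finset.mem_univ _)
    have h7 : p i - q j = p i * Real.log (p i) - p i * Real.log (q j) :=
      mul_left_cancel₀ hPne h6
    exact scalar_klein_eq (hp0 i) (hq0 j) h7.symm
  have hDV : diagonal (fun i => (p i : ℂ)) * V = V * diagonal (fun j => (q j : ℂ)) := by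
    ext i j
    rw [Matrix.diagonal_mul, Matrix.mul_diagonal]
    by_cases h : V i j = 0
    · rw [h, mul_zero, zero_mul]
    · rw [hpq i j h, mul_comm]
  have hVsU : V * star U = star W := by rw [hVdef, mul_assoc, hU1, mul_one]
  have hWV : W * V = U := by rw [hVdef, ← mul_assoc, hW1, one_mul]
  calc ρ = W * diagonal (fun i => (p i : ℂ)) * star W := hρW
    _ = W * (diagonal (fun i => (p i : ℂ)) * V) * star U := by
        rw [← hVsU]
        simp only [mul_assoc]
    _ = W * (V * diagonal (fun j => (q j : ℂ))) * star U := by rw [hDV]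
    _ = U * diagonal (fun j => (q j : ℂ)) * star U := by rw [← mul_assoc W V, hWV]
    _ = gibbs β A := (gibbs_spectral β hA).symm

end KeyLemmas

end MerminAux

/-- (Hohenberg–Kohn/Mermin-type theorem for the canonical ensemble.) If the map from traceless
Hermitian potentials `v` to Gibbs states `ρ_v = e^{-β(H₀+V(v))}/Z[v]` is injective, then the map
`v ↦ γ[ρ_v]` to equilibrium 1RDMs is also injective. Here `V` embeds one-body potentials into
`N`-particle Hamiltonians and `Γ` is the 1RDM map, dual to each other:
`Tr(ρ V(v)) = Tr(γ[ρ] v)`. -/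
theorem mermin_canonical {d m : ℕ} (hd : 0 < d)
    (H₀ : Matrix (Fin d) (Fin d) ℂ) (hH₀ : H₀.IsHermitian) (β : ℝ) (hβ : 0 < β)
    (V : Matrix (Fin m) (Fin m) ℂ →ₗ[ℝ] Matrix (Fin d) (Fin d) ℂ)
    (Γ : Matrix (Fin d) (Fin d) ℂ →ₗ[ℝ] Matrix (Fin m) (Fin m) ℂ)
    (hVherm : ∀ v : Matrix (Fin m) (Fin m) ℂ, v.IsHermitian → (V v).IsHermitian)
    (hdual : ∀ (ρ : Matrix (Fin d) (Fin d) ℂ) (v : Matrix (Fin m) (Fin m) ℂ),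
      v.IsHermitian → (ρ * V v).trace = (Γ ρ * v).trace)
    (hinj : ∀ v₁ v₂ : Matrix (Fin m) (Fin m) ℂ, v₁.IsHermitian → v₂.IsHermitian →
      v₁.trace = 0 → v₂.trace = 0 →
      gibbs β (H₀ + V v₁) = gibbs β (H₀ + V v₂) → v₁ = v₂) :
    ∀ v₁ v₂ : Matrix (Fin m) (Fin m) ℂ, v₁.IsHermitian → v₂.IsHermitian →
      v₁.trace = 0 → v₂.trace = 0 →
      Γ (gibbs β (H₀ + V v₁)) = Γ (gibbs β (H₀ + V v₂)) → v₁ = v₂ := by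
  intro v₁ v₂ hv₁ hv₂ ht₁ ht₂ hΓ
  by_contra hne
  haveI hnd : Nonempty (Fin d) := ⟨⟨0, hd⟩⟩
  have hA₁ : (H₀ + V v₁).IsHermitian := hH₀.add (hVherm v₁ hv₁)
  have hA₂ : (H₀ + V v₂).IsHermitian := hH₀.add (hVherm v₂ hv₂)
  set ρ₁ := gibbs β (H₀ + V v₁) with hρ₁def
  set ρ₂ := gibbs β (H₀ + V v₂) with hρ₂def
  have hρne : ρ₁ ≠ ρ₂ := fun h => hne (hinj v₁ v₂ hv₁ hv₂ ht₁ ht₂ h)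
  have hd₁ : IsDensityMatrix ρ₁ := MerminAux.gibbs_isDensity β hA₁
  have hd₂ : IsDensityMatrix ρ₂ := MerminAux.gibbs_isDensity β hA₂
  have k11 := MerminAux.key_gibbs β hA₁
  have k22 := MerminAux.key_gibbs β hA₂
  have k21 := MerminAux.key β hA₁ hd₂
  have k12 := MerminAux.key β hA₂ hd₁
  have k21pos : 0 < β * ((ρ₂ * (H₀ + V v₁)).trace).re - vnEntropy ρ₂
      + Real.log (MerminAux.Z β hA₁) := by
    rcases lt_or_eq_of_le k21.1 with h | h
    · exact h
    · exact absurd (k21.2 h.symm).symm hρne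
  have k12pos : 0 < β * ((ρ₁ * (H₀ + V v₂)).trace).re - vnEntropy ρ₁
      + Real.log (MerminAux.Z β hA₂) := by
    rcases lt_or_eq_of_le k12.1 with h | h
    · exact h
    · exact absurd (k12.2 h.symm) hρne
  have hsub : (H₀ + V v₁) - (H₀ + V v₂) = V (v₁ - v₂) := by
    rw [map_sub]
    abel
  have hherm : (v₁ - v₂).IsHermitian := hv₁.sub hv₂
  have e2 : (ρ₂ * (H₀ + V v₁)).trace - (ρ₂ * (H₀ + V v₂)).trace
      = (Γ ρ₂ * (v₁ - v₂)).trace := by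
    rw [← hdual ρ₂ (v₁ - v₂) hherm, ← hsub, mul_sub, Matrix.trace_sub]
  have e1 : (ρ₁ * (H₀ + V v₁)).trace - (ρ₁ * (H₀ + V v₂)).trace
      = (Γ ρ₁ * (v₁ - v₂)).trace := by
    rw [← hdual ρ₁ (v₁ - v₂) hherm, ← hsub, mul_sub, Matrix.trace_sub]
  have e3 : (ρ₂ * (H₀ + V v₁)).trace - (ρ₂ * (H₀ + V v₂)).trace
      = (ρ₁ * (H₀ + V v₁)).trace - (ρ₁ * (H₀ + V v₂)).trace := by
    rw [e1, e2, hΓ]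
  have e4 : ((ρ₂ * (H₀ + V v₁)).trace).re - ((ρ₂ * (H₀ + V v₂)).trace).re
      = ((ρ₁ * (H₀ + V v₁)).trace).re - ((ρ₁ * (H₀ + V v₂)).trace).re := by
    have h5 := congrArg Complex.re e3
    simpa [Complex.sub_re] using h5
  have e5 : β * (((ρ₂ * (H₀ + V v₁)).trace).re - ((ρ₂ * (H₀ + V v₂)).trace).re)
      = β * (((ρ₁ * (H₀ + V v₁)).trace).re - ((ρ₁ * (H₀ + V v₂)).trace).re) := by
    rw [e4]
  ring_nf at e5 k21pos k12pos k11 k22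
  linarith [k21pos, k12pos, k11, k22, e5]
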